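/- For every integer m ≥ 1, every τ ∈ ℍ satisfying the nonvanishing assumption, and every z with |q_τ| < |q_z| < 1: if φ = 1 and θ ≠ 1 then P_m^{θ,φ}(z,τ) = (−1)^m P_m[θ,φ](z,τ) − δ_{1,m} · 2πi/(1 − θ^{-1}) (with δ_{1,m} = 1 if m = 1 and 0 otherwise), while in all other cases P_m^{θ,φ}(z,τ) = (−1)^m P_m[θ,φ](z,τ). -/

import Mathlib

open Complex Filter

/-- `qpow w n = e^{2πi n w}`, i.e. `q_w^n` for a real exponent `n`. -/
noncomputable def qpow (w : ℂ) (n : ℝ) : ℂ := Complex.exp (2 * Real.pi * Complex.I * n * w)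

/-- `qq w = e^{2πi w} = q_w`. -/
noncomputable def qq (w : ℂ) : ℂ := Complex.exp (2 * Real.pi * Complex.I * w)

/-- The region `|q_τ| < |q_z| < 1`. -/
def Reg (τ z : ℂ) : Prop := ‖qq τ‖ < ‖qq z‖ ∧ ‖qq z‖ < 1

/-- The `n = λ + m` term of the series defining the twisted Weierstrass function
`P_k[θ,φ](z,τ)`, where the term is omitted when `(θ,φ) = (1,1)` (i.e. `λ = 0` and
`θ = 1`) and `n = 0`. -/
noncomputable def Pterm (k : ℕ) (lam : ℝ) (θ : ℂ) (τ z : ℂ) (m : ℤ) : ℂ :=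
  if lam = 0 ∧ θ = 1 ∧ m = 0 then 0
  else ((lam + (m : ℝ) : ℝ) : ℂ) ^ (k - 1) * qpow z (lam + (m : ℝ)) /
    (1 - θ⁻¹ * qpow τ (lam + (m : ℝ)))

/-- The twisted Weierstrass function
`P_k[θ,φ](z,τ) = ((−2πi)^k/(k−1)!) Σ'_{n ∈ λ+ℤ} n^{k−1} q_z^n/(1 − θ⁻¹ q_τ^n)`. -/
noncomputable def twP (k : ℕ) (lam : ℝ) (θ : ℂ) (τ z : ℂ) : ℂ :=
  ((-(2 * Real.pi * Complex.I)) ^ k / (Nat.factorial (k - 1) : ℂ)) *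
    ∑' m : ℤ, Pterm k lam θ τ z m

/-- The `n = λ + m` term of the series defining the twisted `P`-type function
`P_1^{θ,φ}(z,τ)`; when `φ = 1` (i.e. `λ = 0`) the term `n = 0` is omitted. -/
noncomputable def Qterm1 (lam : ℝ) (θ : ℂ) (τ z : ℂ) (m : ℤ) : ℂ :=
  if lam = 0 ∧ m = 0 then 0
  else qpow z (lam + (m : ℝ)) / (1 - θ⁻¹ * qpow τ (lam + (m : ℝ)))

/-- The twisted `P`-type function `P_1^{θ,φ}(z,τ)`. -/
noncomputable def twQ1 (lam : ℝ) (θ : ℂ) (τ z : ℂ) : ℂ :=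
  2 * Real.pi * Complex.I * ∑' m : ℤ, Qterm1 lam θ τ z m

/-- The higher twisted `P`-type function
`P_m^{θ,φ}(z,τ) = (1/(m−1)!) (∂/∂z)^{m−1} P_1^{θ,φ}(z,τ)` (for `m = 1` this is
`P_1^{θ,φ}` itself). -/
noncomputable def twQ (m : ℕ) (lam : ℝ) (θ : ℂ) (τ z : ℂ) : ℂ :=
  (1 / (Nat.factorial (m - 1) : ℂ)) *
    iteratedDeriv (m - 1) (fun w : ℂ => twQ1 lam θ τ w) z

lemma two_pi_I_re (n : ℝ) (w : ℂ) :
    (2 * (Real.pi:ℂ) * I * (n:ℂ) * w).re = -(2 * Real.pi * n * w.im) := by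
  have h : (2 * (Real.pi:ℂ) * I * (n:ℂ) * w) = ((2 * Real.pi * n : ℝ) : ℂ) * (I * w) := by
    push_cast; ring
  rw [h, Complex.re_ofReal_mul, Complex.mul_re]
  simp

lemma norm_qpow (w : ℂ) (n : ℝ) : ‖qpow w n‖ = Real.exp (-(2 * Real.pi * n * w.im)) := by
  rw [qpow, Complex.norm_exp, two_pi_I_re]

lemma norm_2piIc (c : ℝ) : ‖2 * (Real.pi:ℂ) * Complex.I * (c:ℂ)‖ = 2 * Real.pi * |c| := by
  simp [map_mul,
    abs_of_pos Real.pi_pos]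

noncomputable def gg (lam : ℝ) (θ τ : ℂ) (k : ℕ) (n : ℤ) (w : ℂ) : ℂ :=
  (2 * (Real.pi:ℂ) * Complex.I * ((lam + (n:ℝ) : ℝ) : ℂ))^k * Qterm1 lam θ τ w n

lemma gg_hasDerivAt (lam : ℝ) (θ τ : ℂ) (k : ℕ) (n : ℤ) (w : ℂ) :
    HasDerivAt (fun x => gg lam θ τ k n x) (gg lam θ τ (k+1) n w) w := by
  by_cases h : lam = 0 ∧ n = 0
  · have h0 : (fun x => gg lam θ τ k n x) = fun _ => (0:ℂ) := by
      funext x; simp [gg, Qterm1, h]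
    have h1 : gg lam θ τ (k+1) n w = 0 := by simp [gg, Qterm1, h]
    rw [h0, h1]; exact hasDerivAt_const w 0
  · set c : ℂ := 2 * (Real.pi:ℂ) * Complex.I * ((lam + (n:ℝ) : ℝ) : ℂ) with hc
    set D : ℂ := 1 - θ⁻¹ * qpow τ (lam + (n:ℝ)) with hD
    have hq : ∀ x : ℂ, Qterm1 lam θ τ x n = Complex.exp (c * x) / D := by
      intro x
      rw [Qterm1, if_neg h]
      simp only [qpow]
      congr 1
    have hd : HasDerivAt (fun x : ℂ => Complex.exp (c * x)) (Complex.exp (c * w) * (c * 1)) w :=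
      ((hasDerivAt_id w).const_mul c).cexp
    have h2 : (fun x => gg lam θ τ k n x) = fun x => c^k * (Complex.exp (c * x) / D) := by
      funext x; rw [gg, hq]
    have h3 : gg lam θ τ (k+1) n w = c^k * (Complex.exp (c * w) * (c * 1) / D) := by
      rw [gg, hq]; ring
    rw [h2, h3]
    exact (hd.div_const D).const_mul _

lemma summable_aux (k : ℕ) {ρ : ℝ} (h0 : 0 < ρ) (h1 : ρ < 1) :
    Summable (fun n : ℕ => ((n:ℝ)+1)^k * ρ^n) := by
  have h := summable_pow_mul_geometric_of_norm_lt_one k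
    (r := ρ) (by rwa [Real.norm_eq_abs, abs_of_pos h0])
  have h2 := (summable_nat_add_iff 1).2 h
  have h3 := h2.mul_left ρ⁻¹
  refine h3.congr fun n => ?_
  push_cast
  rw [pow_succ]
  field_simp

lemma gg_bound (lam : ℝ) (hlam0 : 0 ≤ lam) (hlam1 : lam < 1) (θ : ℂ) (hθ : θ ≠ 0)
    (τ : ℂ) (hτ : 0 < τ.im) (k : ℕ) (a b : ℝ) (ha : 0 < a) (hab : a ≤ b) (hb : b < τ.im) :
    ∃ u : ℤ → ℝ, Summable u ∧ ∀ (n : ℤ) (w : ℂ), a < w.im → w.im < b →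
      ‖gg lam θ τ k n w‖ ≤ u n := by
  refine ⟨fun n => (2*Real.pi*(|(n:ℝ)| + 1))^k *
    ((Real.exp (-(2*Real.pi*(lam+(n:ℝ))*a)) + Real.exp (-(2*Real.pi*(lam+(n:ℝ))*b))) *
      ‖(1:ℂ) - θ⁻¹ * qpow τ (lam + (n:ℝ))‖⁻¹), ?_, ?_⟩
  · apply Summable.of_nat_of_neg_add_one
    · -- positive side
      set ρ := Real.exp (-(2*Real.pi*a)) with hρdef
      have hρ0 : 0 < ρ := Real.exp_pos _
      have hρ1 : ρ < 1 := by
        rw [hρdef, ← Real.exp_zero]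
        exact Real.exp_lt_exp.2 (by nlinarith [Real.pi_pos])
      apply Summable.of_norm_bounded_eventually_nat
        (g := fun n => ((2*Real.pi)^k * 4) * (((n:ℝ)+1)^k * ρ^n))
        ((summable_aux k hρ0 hρ1).mul_left _)
      have htend : Tendsto (fun n:ℕ => ‖θ⁻¹‖ * Real.exp (-(2*Real.pi*(lam+((n:ℤ):ℝ))*τ.im)))
          atTop (nhds 0) := by
        have l1 : Tendsto (fun n:ℕ => 2*Real.pi*(lam+((n:ℤ):ℝ))*τ.im) atTop atTop := by
          have heq : (fun n:ℕ => 2*Real.pi*(lam+((n:ℤ):ℝ))*τ.im)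
              = fun n:ℕ => (2*Real.pi*τ.im)*(n:ℝ) + (2*Real.pi*lam*τ.im) := by
            funext n; push_cast; ring
          rw [heq]
          exact tendsto_atTop_add_const_right _ _
            (tendsto_natCast_atTop_atTop.const_mul_atTop (by positivity))
        have l2 : Tendsto (fun n:ℕ => -(2*Real.pi*(lam+((n:ℤ):ℝ))*τ.im)) atTop atBot :=
          tendsto_neg_atBot_iff.2 l1
        have l3 := Real.tendsto_exp_atBot.comp l2
        simpa using l3.const_mul ‖θ⁻¹‖
      have hev : ∀ᶠ n:ℕ in atTop, ‖(1:ℂ) - θ⁻¹ * qpow τ (lam + ((n:ℤ):ℝ))‖⁻¹ ≤ 2 := by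
        filter_upwards [htend.eventually_lt_const (by norm_num : (0:ℝ) < 1/2)] with n hn
        have hx : ‖θ⁻¹ * qpow τ (lam + ((n:ℤ):ℝ))‖ < 1/2 := by
          rw [norm_mul, norm_qpow]
          exact hn
        have hD : (1:ℝ)/2 ≤ ‖(1:ℂ) - θ⁻¹ * qpow τ (lam + ((n:ℤ):ℝ))‖ := by
          have h2 := norm_sub_norm_le (1:ℂ) (θ⁻¹ * qpow τ (lam + ((n:ℤ):ℝ)))
          rw [norm_one] at h2
          linarith
        calc ‖(1:ℂ) - θ⁻¹ * qpow τ (lam + ((n:ℤ):ℝ))‖⁻¹ ≤ ((1:ℝ)/2)⁻¹ :=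
              inv_anti₀ (by norm_num) hD
          _ = 2 := by norm_num
      filter_upwards [hev] with n hn
      have hcast : |(((n:ℤ)):ℝ)| = (n:ℝ) := by
        push_cast
        exact _root_.abs_of_nonneg (Nat.cast_nonneg n)
      rw [Real.norm_eq_abs, _root_.abs_of_nonneg (by positivity), hcast]
      have hEa : Real.exp (-(2*Real.pi*(lam+((n:ℤ):ℝ))*a)) ≤ ρ^n := by
        rw [hρdef, ← Real.exp_nat_mul, Real.exp_le_exp]
        push_cast
        nlinarith [Real.pi_pos, mul_nonneg hlam0 ha.le]
      have hEb : Real.exp (-(2*Real.pi*(lam+((n:ℤ):ℝ))*b)) ≤ ρ^n := by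
        rw [hρdef, ← Real.exp_nat_mul, Real.exp_le_exp]
        push_cast
        have hna : (n:ℝ)*a ≤ (n:ℝ)*b := mul_le_mul_of_nonneg_left hab (Nat.cast_nonneg n)
        nlinarith [Real.pi_pos, mul_nonneg hlam0 (ha.trans_le hab).le]
      calc (2*Real.pi*((n:ℝ)+1))^k *
            ((Real.exp (-(2*Real.pi*(lam+((n:ℤ):ℝ))*a)) + Real.exp (-(2*Real.pi*(lam+((n:ℤ):ℝ))*b))) *
              ‖(1:ℂ) - θ⁻¹ * qpow τ (lam + ((n:ℤ):ℝ))‖⁻¹)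
          ≤ (2*Real.pi*((n:ℝ)+1))^k * ((ρ^n + ρ^n) * 2) := by
            refine mul_le_mul_of_nonneg_left ?_ (by positivity)
            exact mul_le_mul (add_le_add hEa hEb) hn (by positivity) (by positivity)
        _ = (2*Real.pi)^k * 4 * (((n:ℝ)+1)^k * ρ^n) := by rw [mul_pow]; ring
    · -- negative side
      set σ := Real.exp (-(2*Real.pi*(τ.im - b))) with hσdef
      have hσ0 : 0 < σ := Real.exp_pos _
      have hσ1 : σ < 1 := by
        rw [hσdef, ← Real.exp_zero]
        exact Real.exp_lt_exp.2 (by nlinarith [Real.pi_pos])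
      apply Summable.of_norm_bounded_eventually_nat
        (g := fun n => ((2*Real.pi)^k * 2^k * 4 * ‖θ‖ * Real.exp (2*Real.pi*b)) * (((n:ℝ)+1)^k * σ^n))
        ((summable_aux k hσ0 hσ1).mul_left _)
      have hθn : (0:ℝ) < ‖θ‖ := norm_pos_iff.2 hθ
      have hev : ∀ᶠ n:ℕ in atTop, ‖(1:ℂ) - θ⁻¹ * qpow τ (lam + (((-(n+1)):ℤ):ℝ))‖⁻¹ ≤
          2*‖θ‖*Real.exp (-(2*Real.pi*(n:ℝ)*τ.im)) := by
        have l1 : Tendsto (fun n:ℕ => 2*Real.pi*(n:ℝ)*τ.im) atTop atTop := by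
          have heq : (fun n:ℕ => 2*Real.pi*(n:ℝ)*τ.im) = fun n:ℕ => (2*Real.pi*τ.im)*(n:ℝ) := by
            funext n; ring
          rw [heq]
          exact tendsto_natCast_atTop_atTop.const_mul_atTop (by positivity)
        have l3 : Tendsto (fun n:ℕ => ‖θ‖⁻¹ * Real.exp (2*Real.pi*(n:ℝ)*τ.im)) atTop atTop :=
          (Real.tendsto_exp_atTop.comp l1).const_mul_atTop (by positivity)
        filter_upwards [l3.eventually_ge_atTop 2] with n hn
        have hXval : ‖θ⁻¹ * qpow τ (lam + (((-(n+1)):ℤ):ℝ))‖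
            = ‖θ‖⁻¹ * Real.exp (-(2*Real.pi*(lam + (((-(n+1)):ℤ):ℝ))*τ.im)) := by
          rw [norm_mul, norm_inv, norm_qpow]
        have hX2 : ‖θ‖⁻¹ * Real.exp (2*Real.pi*(n:ℝ)*τ.im) ≤
            ‖θ⁻¹ * qpow τ (lam + (((-(n+1)):ℤ):ℝ))‖ := by
          rw [hXval]
          refine mul_le_mul_of_nonneg_left (Real.exp_le_exp.2 ?_) (by positivity)
          push_cast
          nlinarith [Real.pi_pos, mul_nonneg (mul_nonneg (by positivity : (0:ℝ) ≤ 2*Real.pi)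
            (by linarith : (0:ℝ) ≤ 1 - lam)) hτ.le]
        have hXge2 : (2:ℝ) ≤ ‖θ⁻¹ * qpow τ (lam + (((-(n+1)):ℤ):ℝ))‖ := le_trans hn hX2
        have hD : ‖θ⁻¹ * qpow τ (lam + (((-(n+1)):ℤ):ℝ))‖ / 2 ≤
            ‖(1:ℂ) - θ⁻¹ * qpow τ (lam + (((-(n+1)):ℤ):ℝ))‖ := by
          have h2 := norm_sub_norm_le (θ⁻¹ * qpow τ (lam + (((-(n+1)):ℤ):ℝ))) (1:ℂ)
          rw [norm_one] at h2
          rw [norm_sub_rev] at h2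
          linarith
        calc ‖(1:ℂ) - θ⁻¹ * qpow τ (lam + (((-(n+1)):ℤ):ℝ))‖⁻¹
            ≤ (‖θ⁻¹ * qpow τ (lam + (((-(n+1)):ℤ):ℝ))‖ / 2)⁻¹ :=
              inv_anti₀ (by linarith) hD
          _ = 2 * ‖θ⁻¹ * qpow τ (lam + (((-(n+1)):ℤ):ℝ))‖⁻¹ := by
              rw [div_eq_mul_inv, mul_inv, inv_inv]; ring
          _ ≤ 2*‖θ‖*Real.exp (-(2*Real.pi*(n:ℝ)*τ.im)) := by
              rw [hXval, mul_inv, inv_inv, ← Real.exp_neg, neg_neg]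
              have hee : Real.exp (2*Real.pi*(lam + (((-(n+1)):ℤ):ℝ))*τ.im) ≤
                  Real.exp (-(2*Real.pi*(n:ℝ)*τ.im)) := by
                rw [Real.exp_le_exp]
                push_cast
                nlinarith [Real.pi_pos, mul_nonneg (mul_nonneg (by positivity : (0:ℝ) ≤ 2*Real.pi)
                  (by linarith : (0:ℝ) ≤ 1 - lam)) hτ.le]
              nlinarith [mul_le_mul_of_nonneg_left hee (norm_nonneg θ)]
      filter_upwards [hev] with n hn
      have hcast : |((((-(n+1)):ℤ)):ℝ)| = (n:ℝ)+1 := by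
        push_cast
        rw [abs_neg]; exact _root_.abs_of_nonneg (by positivity)
      rw [Real.norm_eq_abs, _root_.abs_of_nonneg (by positivity), hcast]
      have hEa : Real.exp (-(2*Real.pi*(lam+(((-(n+1)):ℤ):ℝ))*a)) ≤
          Real.exp (2*Real.pi*((n:ℝ)+1)*b) := by
        rw [Real.exp_le_exp]
        push_cast
        have h1 : ((n:ℝ)+1-lam)*a ≤ ((n:ℝ)+1)*b := by nlinarith [mul_nonneg hlam0 ha.le]
        nlinarith [Real.pi_pos]
      have hEb : Real.exp (-(2*Real.pi*(lam+(((-(n+1)):ℤ):ℝ))*b)) ≤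
          Real.exp (2*Real.pi*((n:ℝ)+1)*b) := by
        rw [Real.exp_le_exp]
        push_cast
        have hb0 : (0:ℝ) ≤ b := le_trans ha.le hab
        have h1 : ((n:ℝ)+1-lam)*b ≤ ((n:ℝ)+1)*b := by nlinarith [mul_nonneg hlam0 hb0]
        nlinarith [Real.pi_pos]
      have key1 : Real.exp (2*Real.pi*((n:ℝ)+1)*b) * Real.exp (-(2*Real.pi*(n:ℝ)*τ.im))
          = Real.exp (2*Real.pi*b) * σ^n := by
        rw [← Real.exp_add, hσdef, ← Real.exp_nat_mul, ← Real.exp_add]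
        congr 1; ring
      calc (2*Real.pi*(((n:ℝ)+1)+1))^k *
            ((Real.exp (-(2*Real.pi*(lam+(((-(n+1)):ℤ):ℝ))*a)) +
              Real.exp (-(2*Real.pi*(lam+(((-(n+1)):ℤ):ℝ))*b))) *
              ‖(1:ℂ) - θ⁻¹ * qpow τ (lam + (((-(n+1)):ℤ):ℝ))‖⁻¹)
          ≤ (2*Real.pi*(((n:ℝ)+1)+1))^k *
            ((Real.exp (2*Real.pi*((n:ℝ)+1)*b) + Real.exp (2*Real.pi*((n:ℝ)+1)*b)) *
              (2*‖θ‖*Real.exp (-(2*Real.pi*(n:ℝ)*τ.im)))) := by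
            refine mul_le_mul_of_nonneg_left ?_ (by positivity)
            exact mul_le_mul (add_le_add hEa hEb) hn (by positivity) (by positivity)
        _ ≤ (2*Real.pi*2*((n:ℝ)+1))^k *
            ((Real.exp (2*Real.pi*((n:ℝ)+1)*b) + Real.exp (2*Real.pi*((n:ℝ)+1)*b)) *
              (2*‖θ‖*Real.exp (-(2*Real.pi*(n:ℝ)*τ.im)))) := by
            refine mul_le_mul_of_nonneg_right (pow_le_pow_left₀ (by positivity) ?_ k)
              (by positivity)
            nlinarith [Real.pi_pos, Nat.cast_nonneg (α := ℝ) n]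
        _ = ((2*Real.pi)^k * 2^k * 4 * ‖θ‖) * (((n:ℝ)+1)^k *
              (Real.exp (2*Real.pi*((n:ℝ)+1)*b) * Real.exp (-(2*Real.pi*(n:ℝ)*τ.im)))) := by
            rw [show (2*Real.pi*2*((n:ℝ)+1))^k = (2*Real.pi)^k * 2^k * ((n:ℝ)+1)^k by
              rw [← mul_pow, ← mul_pow]]
            ring
        _ = ((2*Real.pi)^k * 2^k * 4 * ‖θ‖ * Real.exp (2*Real.pi*b)) * (((n:ℝ)+1)^k * σ^n) := by
            rw [key1]; ring
  · intro n w hw1 hw2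
    have hnn : (0:ℝ) ≤ 2*Real.pi*(|(n:ℝ)| + 1) := by positivity
    by_cases hc : lam = 0 ∧ n = 0
    · have : gg lam θ τ k n w = 0 := by simp [gg, Qterm1, hc]
      rw [this, norm_zero]
      positivity
    · rw [gg, norm_mul, norm_pow, Qterm1, if_neg hc, norm_div, div_eq_mul_inv]
      have hfac : ‖2 * (Real.pi:ℂ) * Complex.I * ((lam + (n:ℝ) : ℝ) : ℂ)‖^k ≤
          (2*Real.pi*(|(n:ℝ)| + 1))^k := by
        apply pow_le_pow_left₀ (norm_nonneg _)
        rw [norm_2piIc]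
        have : |lam + (n:ℝ)| ≤ |(n:ℝ)| + 1 := by
          calc |lam + (n:ℝ)| ≤ |lam| + |(n:ℝ)| := abs_add_le _ _
          _ ≤ |(n:ℝ)| + 1 := by rw [_root_.abs_of_nonneg hlam0]; linarith
        nlinarith [Real.pi_pos]
      have hqb : ‖qpow w (lam + (n:ℝ))‖ ≤
          Real.exp (-(2*Real.pi*(lam+(n:ℝ))*a)) + Real.exp (-(2*Real.pi*(lam+(n:ℝ))*b)) := by
        rw [norm_qpow]
        rcases le_or_gt 0 (lam + (n:ℝ)) with h | h
        · refine le_add_of_le_of_nonneg (Real.exp_le_exp.2 ?_) (Real.exp_nonneg _)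
          nlinarith [Real.pi_pos, mul_le_mul_of_nonneg_left hw1.le h]
        · refine le_add_of_nonneg_of_le (Real.exp_nonneg _) (Real.exp_le_exp.2 ?_)
          nlinarith [Real.pi_pos, mul_le_mul_of_nonpos_left hw2.le h.le]
      calc ‖2 * (Real.pi:ℂ) * Complex.I * ((lam + (n:ℝ) : ℝ) : ℂ)‖^k *
            (‖qpow w (lam + (n:ℝ))‖ * ‖(1:ℂ) - θ⁻¹ * qpow τ (lam + (n:ℝ))‖⁻¹) ≤
          (2*Real.pi*(|(n:ℝ)| + 1))^k *
            ((Real.exp (-(2*Real.pi*(lam+(n:ℝ))*a)) + Real.exp (-(2*Real.pi*(lam+(n:ℝ))*b))) *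
              ‖(1:ℂ) - θ⁻¹ * qpow τ (lam + (n:ℝ))‖⁻¹) := by
            apply mul_le_mul hfac ?_ (by positivity) (by positivity)
            exact mul_le_mul_of_nonneg_right hqb (by positivity)

lemma strip_open (a b : ℝ) : IsOpen {w : ℂ | a < w.im ∧ w.im < b} := by
  have h : {w : ℂ | a < w.im ∧ w.im < b} = Complex.im ⁻¹' (Set.Ioo a b) := rfl
  rw [h]
  exact isOpen_Ioo.preimage Complex.continuous_im

lemma strip_preconnected (a b : ℝ) : IsPreconnected {w : ℂ | a < w.im ∧ w.im < b} := by
  have h : {w : ℂ | a < w.im ∧ w.im < b} = {w : ℂ | a < w.im} ∩ {w : ℂ | w.im < b} := rfl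
  rw [h]
  exact ((convex_halfSpace_im_gt a).inter (convex_halfSpace_im_lt b)).isPreconnected

lemma key (lam : ℝ) (hlam0 : 0 ≤ lam) (hlam1 : lam < 1) (θ : ℂ) (hθ : θ ≠ 0)
    (τ : ℂ) (hτ : 0 < τ.im) (k : ℕ) :
    ∀ z : ℂ, 0 < z.im → z.im < τ.im →
      iteratedDeriv k (fun w : ℂ => twQ1 lam θ τ w) z
        = 2 * Real.pi * Complex.I * ∑' n : ℤ, gg lam θ τ k n z := by
  induction k with
  | zero =>
    intro z h0 h1
    rw [iteratedDeriv_zero]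
    rw [twQ1]
    congr 1
    exact tsum_congr fun n => by rw [gg, pow_zero, one_mul]
  | succ k ih =>
    intro z h0 h1
    rw [iteratedDeriv_succ]
    have hopen : IsOpen {w : ℂ | 0 < w.im ∧ w.im < τ.im} := strip_open _ _
    have heq : iteratedDeriv k (fun w : ℂ => twQ1 lam θ τ w)
        =ᶠ[nhds z] fun w => 2 * Real.pi * Complex.I * ∑' n : ℤ, gg lam θ τ k n w := by
      filter_upwards [hopen.mem_nhds ⟨h0, h1⟩] with w hw
      exact ih w hw.1 hw.2
    rw [heq.deriv_eq]
    have ha : (0:ℝ) < z.im/2 := by linarith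
    have hab : z.im/2 ≤ (z.im + τ.im)/2 := by linarith
    have hb : (z.im + τ.im)/2 < τ.im := by linarith
    obtain ⟨u, hu, hub⟩ := gg_bound lam hlam0 hlam1 θ hθ τ hτ (k+1) _ _ ha hab hb
    obtain ⟨u0, hu0, hub0⟩ := gg_bound lam hlam0 hlam1 θ hθ τ hτ k _ _ ha hab hb
    have hz_mem : z ∈ {w : ℂ | z.im/2 < w.im ∧ w.im < (z.im + τ.im)/2} :=
      ⟨by linarith, by linarith⟩
    have hder : HasDerivAt (fun w => ∑' n : ℤ, gg lam θ τ k n w)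
        (∑' n : ℤ, gg lam θ τ (k+1) n z) z := by
      apply hasDerivAt_tsum_of_isPreconnected hu (strip_open _ _) (strip_preconnected _ _)
        (fun n y _ => gg_hasDerivAt lam θ τ k n y)
        (fun n y hy => hub n y hy.1 hy.2) hz_mem ?_ hz_mem
      exact Summable.of_norm_bounded hu0 (fun n => hub0 n z hz_mem.1 hz_mem.2)
    exact (hder.const_mul (2*(Real.pi:ℂ)*Complex.I)).deriv

lemma abs_qq (w : ℂ) : ‖qq w‖ = Real.exp (-(2 * Real.pi * w.im)) := by
  rw [qq, Complex.norm_exp]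
  have h := two_pi_I_re 1 w
  simpa using h


/-- For every integer `m ≥ 1` and every `z` with `|q_τ| < |q_z| < 1`:
if `φ = 1` (i.e. `λ = 0`) and `θ ≠ 1` then
`P_m^{θ,φ}(z,τ) = (−1)^m P_m[θ,φ](z,τ) − δ_{1,m}·2πi/(1 − θ⁻¹)`, while in all other
cases `P_m^{θ,φ}(z,τ) = (−1)^m P_m[θ,φ](z,τ)`. -/
theorem twistedPtype_higher_vs_twistedWeierstrass
    (m : ℕ) (hm : 1 ≤ m) (lam : ℝ) (hlam : lam ∈ Set.Ico (0:ℝ) 1)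
    (θ : ℂ) (hθ : θ ≠ 0) (τ : ℂ) (hτ : 0 < τ.im)
    (hden : ∀ j : ℤ, ¬(lam = 0 ∧ θ = 1 ∧ j = 0) →
      1 - θ⁻¹ * qpow τ (lam + (j : ℝ)) ≠ 0)
    (z : ℂ) (hz : Reg τ z) :
    (lam = 0 → θ ≠ 1 →
      twQ m lam θ τ z = (-1 : ℂ) ^ m * twP m lam θ τ z -
        (if m = 1 then 2 * Real.pi * Complex.I / (1 - θ⁻¹) else 0)) ∧
    (¬(lam = 0 ∧ θ ≠ 1) → twQ m lam θ τ z = (-1 : ℂ) ^ m * twP m lam θ τ z) := by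
  obtain ⟨hlam0, hlam1⟩ := hlam
  obtain ⟨hz1, hz2⟩ := hz
  rw [abs_qq, abs_qq] at hz1
  rw [abs_qq] at hz2
  have him1 : 0 < z.im := by
    rw [show (1:ℝ) = Real.exp 0 by rw [Real.exp_zero]] at hz2
    have := Real.exp_lt_exp.1 hz2
    nlinarith [Real.pi_pos]
  have him2 : z.im < τ.im := by
    have := Real.exp_lt_exp.1 hz1
    nlinarith [Real.pi_pos]
  have hkm : m - 1 + 1 = m := Nat.succ_pred_eq_of_pos hm
  have hQ : twQ m lam θ τ z = (1/(Nat.factorial (m-1) : ℂ)) *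
      (2*Real.pi*Complex.I * ∑' n : ℤ, gg lam θ τ (m-1) n z) := by
    rw [twQ, key lam hlam0 hlam1 θ hθ τ hτ (m-1) z him1 him2]
  set h : ℤ → ℂ := fun n => ((lam + (n:ℝ) : ℝ) : ℂ)^(m-1) * Qterm1 lam θ τ z n with hh
  have hgg : ∀ n, gg lam θ τ (m-1) n z = (2*(Real.pi:ℂ)*Complex.I)^(m-1) * h n := fun n => by
    rw [gg, mul_pow, hh, mul_assoc]
  have hsum_gg : Summable (fun n => gg lam θ τ (m-1) n z) := by
    obtain ⟨u0, hu0, hub0⟩ := gg_bound lam hlam0 hlam1 θ hθ τ hτ (m-1) (z.im/2)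
      ((z.im+τ.im)/2) (by linarith) (by linarith) (by linarith)
    exact Summable.of_norm_bounded hu0 (fun n => hub0 n z (by linarith) (by linarith))
  have hc_ne : (2*(Real.pi:ℂ)*Complex.I)^(m-1) ≠ 0 :=
    pow_ne_zero _ (mul_ne_zero (mul_ne_zero two_ne_zero
      (Complex.ofReal_ne_zero.2 Real.pi_ne_zero)) Complex.I_ne_zero)
  have hsum_h : Summable h := by
    have h2 := hsum_gg.mul_left ((2*(Real.pi:ℂ)*Complex.I)^(m-1))⁻¹
    refine h2.congr fun n => ?_
    rw [hgg n, ← mul_assoc, inv_mul_cancel₀ hc_ne, one_mul]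
  have htsum_gg : ∑' n : ℤ, gg lam θ τ (m-1) n z
      = (2*(Real.pi:ℂ)*Complex.I)^(m-1) * ∑' n, h n := by
    rw [tsum_congr hgg, tsum_mul_left]
  have hQ2 : twQ m lam θ τ z
      = (2*(Real.pi:ℂ)*Complex.I)^m / (Nat.factorial (m-1) : ℂ) * ∑' n, h n := by
    have hpow : (2*(Real.pi:ℂ)*Complex.I)^m
        = (2*(Real.pi:ℂ)*Complex.I)^(m-1) * (2*(Real.pi:ℂ)*Complex.I) := by
      conv_lhs => rw [← hkm]
      rw [pow_succ]
    rw [hQ, htsum_gg, hpow]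
    ring
  have hsign : ((-1:ℂ))^m * (-(2*(Real.pi:ℂ)*Complex.I))^m = (2*(Real.pi:ℂ)*Complex.I)^m := by
    rw [← mul_pow]
    congr 1
    ring
  have hP2 : (-1:ℂ)^m * twP m lam θ τ z
      = (2*(Real.pi:ℂ)*Complex.I)^m / (Nat.factorial (m-1) : ℂ) * ∑' n, Pterm m lam θ τ z n := by
    rw [twP, ← hsign]
    ring
  constructor
  · intro hl0 hθ1
    subst hl0
    by_cases hm1 : m = 1
    · subst hm1
      have hterm : ∀ n : ℤ, Pterm 1 0 θ τ z n = h n + (if n = 0 then 1/(1 - θ⁻¹) else 0) := by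
        intro n
        by_cases hn : n = 0
        · subst hn
          simp [Pterm, Qterm1, hh, qpow, hθ1, one_div]
        · simp [Pterm, Qterm1, hh, hn]
      have hsum_ite : Summable (fun n : ℤ => if n = 0 then (1:ℂ)/(1-θ⁻¹) else 0) :=
        (hasSum_ite_eq 0 _).summable
      have htP : ∑' n, Pterm 1 0 θ τ z n = (∑' n, h n) + 1/(1-θ⁻¹) := by
        rw [tsum_congr hterm, Summable.tsum_add hsum_h hsum_ite, tsum_ite_eq]
      rw [hQ2, hP2, htP, if_pos rfl]
      norm_num [Nat.factorial]
      ring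
    · have hk0 : m - 1 ≠ 0 := by omega
      have hterm : ∀ n : ℤ, Pterm m 0 θ τ z n = h n := by
        intro n
        by_cases hn : n = 0
        · subst hn
          simp [Pterm, Qterm1, hh, zero_pow hk0, hθ1]
        · simp [Pterm, Qterm1, hh, hn, mul_div_assoc]
      rw [hQ2, hP2, tsum_congr hterm, if_neg hm1, sub_zero]
  · intro hcon
    have hterm : ∀ n : ℤ, Pterm m lam θ τ z n = h n := by
      intro n
      by_cases hl : lam = 0
      · have hθ1 : θ = 1 := by
          by_contra hne
          exact hcon ⟨hl, hne⟩
        by_cases hn : n = 0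
        · subst hn
          simp [Pterm, Qterm1, hh, hl, hθ1]
        · simp [Pterm, Qterm1, hh, hl, hn, mul_div_assoc]
      · simp [Pterm, Qterm1, hh, hl, mul_div_assoc]
    rw [hQ2, hP2, tsum_congr hterm]
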